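/- Let K be a field, A and B commutative K-algebras, C a cocommutative K-coalgebra, and ψ : C → Hom_K(A,B) a (cocommutative) coalgebra measuring from A to B. Let M be an A-module, N a B-module, D a C-comodule, and φ : D → Hom_K(M,N) a C-comodule measuring from M to N relative to ψ. Then for every pointed simplicial set Y and every t ∈ D, there is an induced K-linear morphism φ^Y_n(t) : HH_n^Y(A,M) → HH_n^Y(B,N) for each n ≥ 0 on higher order Hochschild homology groups of order Y, induced by the chain-level maps m ⊗ a₁ ⊗ … ⊗ a_k ↦ Σ φ(t₍₀₎)(m) ⊗ ψ(t₍₁₎)(a₁) ⊗ … ⊗ ψ(t₍ₖ₎)(a_k). -/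

import Mathlib

/-!
Common infrastructure: the skeletal category `Γ` of finite pointed sets, coalgebra
measurings, comodule measurings, iterated comultiplications/coactions, the Sweedler-type
chain-level maps of a measuring, the Loday `Γ`-module data, and higher order Hochschild
homology of a `Γ`-module with respect to a pointed simplicial set (via left Kan extension
along `Γ → Sets_⋆`, followed by the Moore (alternating face map) complex and homology).
-/

open CategoryTheory TensorProduct PiTensorProduct

/-- A morphism of the skeletal category `Γ` of finite pointed sets, from
`[k] = {0,…,k}` to `[l] = {0,…,l}` (based at `0`). -/
@[ext] structure GammaHom (k l : ℕ) : Type where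
  toFun : Fin (k + 1) → Fin (l + 1)
  map_zero : toFun 0 = 0

/-- The identity of `[k]` in `Γ`. -/
def GammaHom.id (k : ℕ) : GammaHom k k := ⟨_root_.id, rfl⟩

/-- Composition in `Γ`. -/
def GammaHom.comp {k l p : ℕ} (g : GammaHom l p) (f : GammaHom k l) : GammaHom k p :=
  ⟨g.toFun ∘ f.toFun, by simp [Function.comp, f.map_zero, g.map_zero]⟩

/-- The skeletal category `Γ` of finite pointed sets `[k] = {0,1,…,k}` based at `0`. -/
structure GammaCat : Type where
  len : ℕ

instance : Category GammaCat where
  Hom a b := GammaHom a.len b.len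
  id a := GammaHom.id a.len
  comp f g := g.comp f
  id_comp _ := rfl
  comp_id _ := rfl
  assoc _ _ _ := rfl

/-- The inclusion `Γ → Sets_⋆` of `Γ` into the category of pointed sets. -/
def gammaToPointed : GammaCat ⥤ Pointed.{0} where
  obj a := ⟨Fin (a.len + 1), 0⟩
  map f := ⟨f.toFun, f.map_zero⟩
  map_id _ := rfl
  map_comp _ _ := rfl

/-- The fiber `f⁻¹(0) ∖ {0}` of `f : [k] → [l]` over the basepoint, with
`{1,…,k}` identified with `Fin k` via `i ↦ i.succ`. -/
def fiber0 {k l : ℕ} (f : GammaHom k l) : Finset (Fin k) :=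
  Finset.univ.filter fun i => f.toFun i.succ = 0

/-- The fiber `f⁻¹(j)` of `f : [k] → [l]` over `j ∈ {1,…,l}`, with
`{1,…,k}` identified with `Fin k` via `i ↦ i.succ`. -/
def fiber {k l : ℕ} (f : GammaHom k l) (j : Fin l) : Finset (Fin k) :=
  Finset.univ.filter fun i => f.toFun i.succ = j.succ

section Measuring

variable (K A B C : Type) [Field K]
variable [Ring A] [Algebra K A] [Ring B] [Algebra K B]
variable [AddCommGroup C] [Module K C] [Coalgebra K C]

/-- `ψ : C →ₗ[K] Hom_K(A,B)` is a coalgebra measuring from `A` to `B`: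
`ψ s (a * a') = Σ ψ s₍₁₎ a * ψ s₍₂₎ a'` (Sweedler sum over `Δ s = Σ s₍₁₎ ⊗ s₍₂₎`)
and `ψ s 1 = ε s • 1`. -/
structure IsMeasuring (ψ : C →ₗ[K] A →ₗ[K] B) : Prop where
  measures_mul : ∀ (s : C) (a a' : A),
    ψ s (a * a') =
      TensorProduct.lift ((LinearMap.mul K B).compl₁₂ (ψ.flip a) (ψ.flip a'))
        (Coalgebra.comul s)
  measures_one : ∀ s : C, ψ s 1 = Coalgebra.counit (R := K) s • (1 : B)

/-- The coalgebra `C` is cocommutative. -/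
def IsCocommutative : Prop :=
  (TensorProduct.comm K C C).toLinearMap ∘ₗ Coalgebra.comul =
    (Coalgebra.comul : C →ₗ[K] C ⊗[K] C)

end Measuring

section Comodule

variable (K C D : Type) [Field K]
variable [AddCommGroup C] [Module K C] [Coalgebra K C]
variable [AddCommGroup D] [Module K D]

/-- A (left) `C`-comodule structure `δ : D → C ⊗ D` on `D`, coassociative and counital. -/
structure CoactionStruct where
  δ : D →ₗ[K] C ⊗[K] D
  coassoc : (TensorProduct.assoc K C C D).toLinearMap ∘ₗ
      (Coalgebra.comul (R := K) (A := C)).rTensor D ∘ₗ δ = δ.lTensor C ∘ₗ δ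
  rTensor_counit_comp_coaction :
    (Coalgebra.counit (R := K) (A := C)).rTensor D ∘ₗ δ = TensorProduct.mk K K D 1

/-- Any coalgebra is a comodule over itself via its comultiplication. -/
def selfCoaction : CoactionStruct K C C where
  δ := Coalgebra.comul
  coassoc := Coalgebra.coassoc
  rTensor_counit_comp_coaction := Coalgebra.rTensor_counit_comp_comul

/-- Nested tensor powers `C ⊗ (C ⊗ (⋯ ⊗ (C ⊗ D)))` with `k` factors of `C`. -/
noncomputable def TD : ℕ → ModuleCat.{0} K
  | 0 => ModuleCat.of K D
  | (k+1) => ModuleCat.of K (C ⊗[K] TD k)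

/-- Iterated comultiplication of the first tensor factor,
`Δ^{(k)} ⊗ id : C ⊗ D → C^{⊗(k+1)} ⊗ D`, where `Δ^{(0)} = id` and
`Δ^{(j)} = (Δ ⊗ id^{⊗(j-1)}) ∘ Δ^{(j-1)}`. -/
noncomputable def comulIterTail : (k : ℕ) → (C ⊗[K] D) →ₗ[K] TD K C D (k+1)
  | 0 => LinearMap.id
  | (k+1) =>
      (((TensorProduct.assoc K C C (TD K C D k)).toLinearMap ∘ₗ
        (Coalgebra.comul (R := K) (A := C)).rTensor (TD K C D k)) ∘ₗ
        comulIterTail k)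

/-- The iterated coaction `D → C^{⊗k} ⊗ D` giving the iterated Sweedler coefficients
`t₍₁₎ ⊗ ⋯ ⊗ t₍ₖ₎ ⊗ t₍₀₎` of `t ∈ D`: the coaction `δ` followed by the `(k-1)`-fold
iterated comultiplication on the `C`-factor. -/
noncomputable def coactIter (ρ : CoactionStruct K C D) : (k : ℕ) → D →ₗ[K] TD K C D k
  | 0 => LinearMap.id
  | (k+1) => comulIterTail K C D k ∘ₗ ρ.δ

/-- The iterated comultiplication `Δ^{(k-1)} : C → C^{⊗k}` (with `Δ^{(0)} = id`,
`Δ^{(j)} = (Δ ⊗ id^{⊗(j-1)}) ∘ Δ^{(j-1)}`), giving the iterated Sweedler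
coefficients `s₍₁₎ ⊗ ⋯ ⊗ s₍ₖ₎` of `s ∈ C`. -/
noncomputable def comulIter : (k : ℕ) → C →ₗ[K] TD K C C k
  | 0 => LinearMap.id
  | (k+1) => comulIterTail K C C k ∘ₗ Coalgebra.comul

end Comodule

section ComodMeasuring

variable (K A B C D M N : Type) [Field K]
variable [Ring A] [Algebra K A] [Ring B] [Algebra K B]
variable [AddCommGroup C] [Module K C] [Coalgebra K C]
variable [AddCommGroup D] [Module K D]
variable [AddCommGroup M] [Module K M] [Module A M] [IsScalarTower K A M] [SMulCommClass K A M]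
variable [AddCommGroup N] [Module K N] [Module B N] [IsScalarTower K B N] [SMulCommClass K B N]

/-- The scalar action of `B` on the `B`-module `N`, as a `K`-bilinear map. -/
def lsmulKB : B →ₗ[K] N →ₗ[K] N :=
  LinearMap.mk₂ K (fun b n => b • n) (fun b b' n => add_smul b b' n)
    (fun c b n => smul_assoc c b n) (fun b n n' => smul_add b n n')
    (fun c b n => (smul_comm c b n).symm)

/-- `φ : D →ₗ[K] Hom_K(M,N)` is a `C`-comodule measuring from the `A`-module `M` to the
`B`-module `N`, relative to the measuring `ψ` and the coaction `ρ` on `D`: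
`φ t (a • m) = Σ ψ t₍₀₎ a • φ t₍₁₎ m` (Sweedler sum over `δ t = Σ t₍₀₎ ⊗ t₍₁₎`). -/
structure IsComodMeasuring (ψ : C →ₗ[K] A →ₗ[K] B) (ρ : CoactionStruct K C D)
    (φ : D →ₗ[K] M →ₗ[K] N) : Prop where
  measures : ∀ (t : D) (a : A) (m : M),
    φ t (a • m) =
      TensorProduct.lift ((lsmulKB K B N).compl₁₂ (ψ.flip a) (φ.flip m)) (ρ.δ t)

variable (ψ : C →ₗ[K] A →ₗ[K] B) (φ : D →ₗ[K] M →ₗ[K] N)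

/-- `c₁ ⊗ (c₂ ⊗ (⋯ ⊗ cₖ₊₁)) ↦ ψ c₁ a₁ * (ψ c₂ a₂ * (⋯ * ψ cₖ₊₁ aₖ₊₁))` : the ordered
product of the values of a measuring on the iterated Sweedler coefficients. -/
noncomputable def prodPair : (k : ℕ) → (Fin (k+1) → A) → (TD K C C k →ₗ[K] B)
  | 0, a => ψ.flip (a 0)
  | (k+1), a => TensorProduct.lift
      ((LinearMap.mul K B).compl₁₂ (ψ.flip (a 0)) (prodPair k (a ∘ Fin.succ)))

/-- `c₁ ⊗ (⋯ ⊗ (cₖ ⊗ d)) ↦ ψ c₁ a₁ • (ψ c₂ a₂ • (⋯ • φ d m))`. -/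
noncomputable def modPair : (k : ℕ) → (Fin k → A) → M → (TD K C D k →ₗ[K] N)
  | 0, _, m => φ.flip m
  | (k+1), a, m => TensorProduct.lift
      ((lsmulKB K B N).compl₁₂ (ψ.flip (a 0)) (modPair k (a ∘ Fin.succ) m))

/-- Prepending a factor to a tensor power of `B`, as a `K`-bilinear map. -/
noncomputable def tprodCons (k : ℕ) :
    B →ₗ[K] (⨂[K] (_ : Fin k), B) →ₗ[K] (⨂[K] (_ : Fin (k+1)), B) :=
  (PiTensorProduct.lift).toLinearMap ∘ₗ
    (PiTensorProduct.tprod K (s := fun _ : Fin (k+1) => B)).curryLeft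

/-- `c₁ ⊗ (⋯ ⊗ (cₖ ⊗ d)) ↦ φ d m ⊗ ψ c₁ a₁ ⊗ ⋯ ⊗ ψ cₖ aₖ` : applied to the iterated
coaction of `t`, this produces the Sweedler-type chain-level expression
`Σ φ t₍₀₎ m ⊗ ψ t₍₁₎ a₁ ⊗ ⋯ ⊗ ψ t₍ₖ₎ aₖ` of a comodule measuring. -/
noncomputable def measurePair : (k : ℕ) → M → (Fin k → A) →
    (TD K C D k →ₗ[K] N ⊗[K] (⨂[K] (_ : Fin k), B))
  | 0, m, _ =>
      (TensorProduct.mk K N (⨂[K] (_ : Fin 0), B)).flip (tprod K (fun _ : Fin 0 => (1:B)))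
        ∘ₗ (φ.flip m)
  | (k+1), m, a => TensorProduct.lift <|
      ((LinearMap.llcomp K (TD K C D k) (N ⊗[K] (⨂[K] (_ : Fin k), B))
          (N ⊗[K] (⨂[K] (_ : Fin (k+1)), B))).flip (measurePair k m (a ∘ Fin.succ))) ∘ₗ
        ((TensorProduct.mapBilinear (σ₁₂ := RingHom.id K) (M := N) (N := ⨂[K] (_ : Fin k), B) (M₂ := N)
            (N₂ := ⨂[K] (_ : Fin (k+1)), B)
            LinearMap.id) ∘ₗ (tprodCons K B k) ∘ₗ (ψ.flip (a 0)))

end ComodMeasuring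

section Loday

variable (K A M : Type) [Field K] [CommRing A] [Algebra K A]
variable [AddCommGroup M] [Module K M] [Module A M] [IsScalarTower K A M] [SMulCommClass K A M]

/-- The `k`-th term `M ⊗ A^{⊗k}` of the Loday `Γ`-module `L(A,M)`. -/
abbrev Lob (k : ℕ) : Type := M ⊗[K] (⨂[K] (_ : Fin k), A)

/-- The value of the Loday map `L(A,M)(f)` on the pure tensor `m ⊗ a₁ ⊗ ⋯ ⊗ aₖ`, namely
`(m • ∏_{i ∈ f⁻¹(0), i ≠ 0} aᵢ) ⊗ (∏_{i ∈ f⁻¹(1)} aᵢ) ⊗ ⋯ ⊗ (∏_{i ∈ f⁻¹(l)} aᵢ)`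
(empty products are `1`). -/
noncomputable def lodayElt {k l : ℕ} (f : GammaHom k l) (m : M) (a : Fin k → A) :
    Lob K A M l :=
  ((∏ i ∈ fiber0 f, a i) • m) ⊗ₜ[K] tprod K (fun j => ∏ i ∈ fiber f j, a i)

/-- The Loday `Γ`-module `L(A,M) : Γ ⥤ Vect_K`, assembled from a family of linear maps
satisfying the functoriality equations. -/
noncomputable def lodayFunctorOf
    (F : ∀ k l : ℕ, GammaHom k l → (Lob K A M k →ₗ[K] Lob K A M l))
    (hFid : ∀ k, F k k (GammaHom.id k) = LinearMap.id)
    (hFcomp : ∀ (k l p : ℕ) (f : GammaHom k l) (g : GammaHom l p),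
      F k p (g.comp f) = (F l p g) ∘ₗ (F k l f)) :
    GammaCat ⥤ ModuleCat.{0} K where
  obj a := ModuleCat.of K (Lob K A M a.len)
  map {a b} f := ModuleCat.ofHom (F a.len b.len f)
  map_id a := congrArg ModuleCat.ofHom (hFid a.len)
  map_comp {a b c} f g := congrArg ModuleCat.ofHom (hFcomp a.len b.len c.len f g)

end Loday

section HH

variable (K : Type) [Field K]

/-- The simplicial vector space `R̃(Y_•)` associated to a `Γ`-module `R` and a pointed
simplicial set `Y`, where `R̃ : Sets_⋆ ⥤ Vect_K` is the left Kan extension of `R` along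
the inclusion `Γ → Sets_⋆`. -/
noncomputable def simplicialExt (L : GammaCat ⥤ ModuleCat.{0} K)
    (Y : SimplexCategoryᵒᵖ ⥤ Pointed.{0}) : SimplicialObject (ModuleCat.{0} K) :=
  Y ⋙ (gammaToPointed.lan).obj L

/-- The homology `H_n(R̃(Y_•))` of the simplicial vector space `R̃(Y_•)` (computed via the
Moore / alternating face map complex).  For `R = L(A,M)` this is the higher order
Hochschild homology `HH_n^Y(A,M)` of order `Y`. -/
noncomputable def hh (L : GammaCat ⥤ ModuleCat.{0} K)
    (Y : SimplexCategoryᵒᵖ ⥤ Pointed.{0}) (n : ℕ) : ModuleCat.{0} K :=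
  ((AlgebraicTopology.alternatingFaceMapComplex (ModuleCat.{0} K)).obj
    (simplicialExt K L Y)).homology n

/-- The map induced on `H_n(R̃(Y_•))` by a morphism of `Γ`-modules `η : R ⟶ R'`. -/
noncomputable def hhMapOfNat {L L' : GammaCat ⥤ ModuleCat.{0} K} (η : L ⟶ L')
    (Y : SimplexCategoryᵒᵖ ⥤ Pointed.{0}) (n : ℕ) : hh K L Y n ⟶ hh K L' Y n :=
  HomologicalComplex.homologyMap
    ((AlgebraicTopology.alternatingFaceMapComplex (ModuleCat.{0} K)).map
      (CategoryTheory.Functor.whiskerLeft Y ((gammaToPointed.lan).map η))) n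

/-- The map induced on `H_n(R̃(Y_•))` by a map of pointed simplicial sets `g : Y ⟶ Z`. -/
noncomputable def hhMapOfSimplicial (L : GammaCat ⥤ ModuleCat.{0} K)
    {Y Z : SimplexCategoryᵒᵖ ⥤ Pointed.{0}} (g : Y ⟶ Z) (n : ℕ) :
    hh K L Y n ⟶ hh K L Z n :=
  HomologicalComplex.homologyMap
    ((AlgebraicTopology.alternatingFaceMapComplex (ModuleCat.{0} K)).map
      (CategoryTheory.Functor.whiskerRight g ((gammaToPointed.lan).obj L))) n

end HH

set_option linter.unusedSectionVars false
set_option maxHeartbeats 1000000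

namespace HHAux

variable {K C D : Type} [Field K]
variable [AddCommGroup C] [Module K C] [Coalgebra K C]
variable [AddCommGroup D] [Module K D]
variable (ρ : CoactionStruct K C D)

variable {X Y Y' Z W : Type} [AddCommGroup X] [Module K X] [AddCommGroup Y] [Module K Y]
  [AddCommGroup Y'] [Module K Y'] [AddCommGroup Z] [Module K Z] [AddCommGroup W] [Module K W]

/-- `A1 ρ F t = Σ F t₍₋₁₎ t₍₀₎`. -/
noncomputable def A1 (F : C →ₗ[K] D →ₗ[K] X) : D →ₗ[K] X :=
  TensorProduct.lift F ∘ₗ ρ.δ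

lemma A1_apply (F : C →ₗ[K] D →ₗ[K] X) (d : D) :
    A1 ρ F d = TensorProduct.lift F (ρ.δ d) := rfl

lemma comp_A1 (g : X →ₗ[K] Y) (H : C →ₗ[K] D →ₗ[K] X) :
    g ∘ₗ A1 ρ H = A1 ρ (H.compr₂ g) := by
  unfold A1
  rw [← LinearMap.comp_assoc, ← TensorProduct.lift_compr₂]

lemma lift_lTensor {V : Type} [AddCommGroup V] [Module K V]
    (g : D →ₗ[K] V) (W : C →ₗ[K] V →ₗ[K] X) :
    TensorProduct.lift W ∘ₗ LinearMap.lTensor C g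
      = TensorProduct.lift ((LinearMap.lcomp K X g) ∘ₗ W) := by
  apply TensorProduct.ext'
  intro c d
  simp [TensorProduct.lift.tmul]

noncomputable def A1lin : (C →ₗ[K] D →ₗ[K] X) →ₗ[K] (D →ₗ[K] X) :=
  ((LinearMap.llcomp K D (C ⊗[K] D) X).flip ρ.δ) ∘ₗ TensorProduct.uncurry (RingHom.id K) C D X

lemma uncurry_eq (F : C →ₗ[K] D →ₗ[K] X) :
    TensorProduct.uncurry (RingHom.id K) C D X F = TensorProduct.lift F := by
  apply TensorProduct.ext'
  intro c d
  simp [TensorProduct.uncurry_apply, TensorProduct.lift.tmul]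

lemma A1lin_apply (F : C →ₗ[K] D →ₗ[K] X) : A1lin ρ F = A1 ρ F := by
  simp only [A1lin, A1, LinearMap.comp_apply, LinearMap.flip_apply, uncurry_eq]
  rfl

/-- Coassociativity: the nested coaction pattern equals comultiplication of the first
Sweedler factor. -/
lemma A2_coassoc (F : C →ₗ[K] C →ₗ[K] D →ₗ[K] X) :
    A1 ρ (A1lin ρ ∘ₗ F) = A1 ρ (TensorProduct.lift F ∘ₗ Coalgebra.comul) := by
  unfold A1
  have h1 : TensorProduct.lift (A1lin ρ ∘ₗ F)
      = TensorProduct.lift (TensorProduct.uncurry (RingHom.id K) C D X ∘ₗ F) ∘ₗ LinearMap.lTensor C ρ.δ := by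
    apply TensorProduct.ext'
    intro c d
    simp only [LinearMap.comp_apply, TensorProduct.lift.tmul, LinearMap.lTensor_tmul,
      A1lin_apply, A1_apply, uncurry_eq]
  have h2 : TensorProduct.lift (TensorProduct.lift F ∘ₗ Coalgebra.comul)
      = (TensorProduct.lift (TensorProduct.uncurry (RingHom.id K) C D X ∘ₗ F)
          ∘ₗ (TensorProduct.assoc K C C D).toLinearMap)
        ∘ₗ LinearMap.rTensor D (Coalgebra.comul (R := K) (A := C)) := by
    apply TensorProduct.ext'
    intro c d
    simp only [LinearMap.comp_apply, TensorProduct.lift.tmul, LinearMap.rTensor_tmul]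
    induction (Coalgebra.comul (R := K) c) using TensorProduct.induction_on with
    | zero => simp
    | tmul c1 c2 =>
        simp [TensorProduct.lift.tmul, uncurry_eq]
    | add x y hx hy => simp [map_add, hx, hy, TensorProduct.add_tmul]
  rw [h1, h2]
  simp only [LinearMap.comp_assoc]
  rw [← ρ.coassoc]

lemma comul_flip (hco : IsCocommutative K C) (F : C →ₗ[K] C →ₗ[K] W) :
    TensorProduct.lift F ∘ₗ (Coalgebra.comul (R := K) (A := C))
      = TensorProduct.lift F.flip ∘ₗ Coalgebra.comul := by
  have h : TensorProduct.lift F.flip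
      = TensorProduct.lift F ∘ₗ (TensorProduct.comm K C C).toLinearMap := by
    apply TensorProduct.ext'
    intro c c'
    simp [TensorProduct.lift.tmul]
  rw [h, LinearMap.comp_assoc, hco]

lemma A1_counit_smul (R : D →ₗ[K] X) :
    A1 ρ ((Coalgebra.counit (R := K) (A := C)).smulRight R) = R := by
  unfold A1
  have h : TensorProduct.lift ((Coalgebra.counit (R := K) (A := C)).smulRight R)
      = (R ∘ₗ (TensorProduct.lid K D).toLinearMap)
        ∘ₗ LinearMap.rTensor D (Coalgebra.counit (R := K) (A := C)) := by
    apply TensorProduct.ext'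
    intro c d
    simp [TensorProduct.lift.tmul, TensorProduct.lid_tmul, map_smul]
  rw [h, LinearMap.comp_assoc, ρ.rTensor_counit_comp_coaction]
  ext d
  simp

section Mix
variable {B : Type} [CommRing B] [Algebra K B]

/-- The functional `c ↦ T (e c) ∘ₗ Q`. -/
noncomputable def mixF (T : B →ₗ[K] X →ₗ[K] Y) (e : C →ₗ[K] B) (Q : D →ₗ[K] X) :
    C →ₗ[K] D →ₗ[K] Y :=
  (LinearMap.lcomp K Y Q) ∘ₗ T ∘ₗ e

lemma mixF_apply (T : B →ₗ[K] X →ₗ[K] Y) (e : C →ₗ[K] B) (Q : D →ₗ[K] X) (c : C) :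
    mixF T e Q c = (T (e c)) ∘ₗ Q := rfl

/-- `mix ρ T e Q : t ↦ Σ T (e t₍₋₁₎) (Q t₍₀₎)`. -/
noncomputable def mix (T : B →ₗ[K] X →ₗ[K] Y) (e : C →ₗ[K] B) (Q : D →ₗ[K] X) :
    D →ₗ[K] Y :=
  A1 ρ (mixF T e Q)

/-- The bilinear functional `(c, c') ↦ T (e c) ∘ₗ S (e' c') ∘ₗ Q`. -/
noncomputable def biF (T : B →ₗ[K] Y →ₗ[K] Z) (e : C →ₗ[K] B)
    (S : B →ₗ[K] X →ₗ[K] Y) (e' : C →ₗ[K] B) (Q : D →ₗ[K] X) :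
    C →ₗ[K] C →ₗ[K] D →ₗ[K] Z :=
  ((LinearMap.llcomp K D Y Z) ∘ₗ T ∘ₗ e).compl₂ (mixF S e' Q)

lemma biF_apply (T : B →ₗ[K] Y →ₗ[K] Z) (e : C →ₗ[K] B)
    (S : B →ₗ[K] X →ₗ[K] Y) (e' : C →ₗ[K] B) (Q : D →ₗ[K] X) (c c' : C) (d : D) :
    biF T e S e' Q c c' d = T (e c) (S (e' c') (Q d)) := rfl

lemma mix_mix (T : B →ₗ[K] Y →ₗ[K] Z) (e : C →ₗ[K] B)
    (S : B →ₗ[K] X →ₗ[K] Y) (e' : C →ₗ[K] B) (Q : D →ₗ[K] X) :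
    mix ρ T e (mix ρ S e' Q) = A1 ρ (A1lin ρ ∘ₗ biF T e S e' Q) := by
  unfold mix
  congr 1
  ext c d
  have hb : biF T e S e' Q c = (mixF S e' Q).compr₂ (T (e c)) := by
    ext c' d'
    rfl
  simp only [LinearMap.comp_apply, A1lin_apply, A1_apply, mixF_apply, hb,
    TensorProduct.lift_compr₂]

lemma swap_mix (hco : IsCocommutative K C)
    (T : B →ₗ[K] Y →ₗ[K] Z) (S : B →ₗ[K] X →ₗ[K] Y)
    (T' : B →ₗ[K] Y' →ₗ[K] Z) (S' : B →ₗ[K] X →ₗ[K] Y')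
    (e e' : C →ₗ[K] B) (Q : D →ₗ[K] X)
    (h : ∀ b b' : B, T b ∘ₗ S b' = T' b' ∘ₗ S' b) :
    mix ρ T e (mix ρ S e' Q) = mix ρ T' e' (mix ρ S' e Q) := by
  rw [mix_mix, mix_mix, A2_coassoc, A2_coassoc, comul_flip hco]
  congr 2
  ext c c' d
  have := LinearMap.congr_fun (h (e c') (e' c)) (Q d)
  simpa [biF_apply, LinearMap.flip_apply] using this

/-- Convolution of two functionals on `C`. -/
noncomputable def conv (e e' : C →ₗ[K] B) : C →ₗ[K] B :=
  TensorProduct.lift ((LinearMap.mul K B).compl₁₂ e e') ∘ₗ Coalgebra.comul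

lemma conv_mix (hco : IsCocommutative K C)
    (T : B →ₗ[K] X →ₗ[K] Y) (U : B →ₗ[K] Y →ₗ[K] Y)
    (e e' : C →ₗ[K] B) (Q : D →ₗ[K] X)
    (h : ∀ b b' : B, T (b * b') = U b' ∘ₗ T b) :
    mix ρ T (conv e e') Q = mix ρ U e' (mix ρ T e Q) := by
  have key : mixF T (conv e e') Q
      = TensorProduct.lift (biF U e' T e Q).flip ∘ₗ (Coalgebra.comul (R := K) (A := C)) := by
    ext c d
    simp only [mixF_apply, LinearMap.comp_apply, conv]
    induction (Coalgebra.comul (R := K) c) using TensorProduct.induction_on with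
    | zero => simp
    | tmul c1 c2 =>
        have := LinearMap.congr_fun (h (e c1) (e' c2)) (Q d)
        simpa [TensorProduct.lift.tmul, biF_apply, LinearMap.flip_apply,
          LinearMap.mul_apply'] using this
    | add x y hx hy => simp [map_add, hx, hy, LinearMap.add_apply]
  rw [mix, key, ← comul_flip hco, ← A2_coassoc, ← mix_mix]

lemma mix_unit (T : B →ₗ[K] X →ₗ[K] Y) (Q : D →ₗ[K] X) :
    mix ρ T (LinearMap.toSpanSingleton K B 1 ∘ₗ (Coalgebra.counit (R := K) (A := C))) Q
      = T 1 ∘ₗ Q := by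
  have h : mixF T (LinearMap.toSpanSingleton K B 1
        ∘ₗ (Coalgebra.counit (R := K) (A := C))) Q
      = (Coalgebra.counit (R := K) (A := C)).smulRight (T 1 ∘ₗ Q) := by
    ext c d
    simp [mixF_apply, LinearMap.toSpanSingleton_apply, map_smul, LinearMap.smul_apply]
  rw [mix, h, A1_counit_smul]

/-- Pushing a linear map through a `mix`. -/
lemma push_mix {X' : Type} [AddCommGroup X'] [Module K X']
    (g : Y →ₗ[K] Z) (g' : X →ₗ[K] X')
    (T : B →ₗ[K] X →ₗ[K] Y) (T' : B →ₗ[K] X' →ₗ[K] Z)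
    (e : C →ₗ[K] B) (Q : D →ₗ[K] X)
    (h : ∀ b : B, g ∘ₗ T b = T' b ∘ₗ g') :
    g ∘ₗ mix ρ T e Q = mix ρ T' e (g' ∘ₗ Q) := by
  unfold mix
  rw [comp_A1]
  congr 1
  ext c d
  have := LinearMap.congr_fun (h (e c)) (Q d)
  simpa [mixF_apply] using this

end Mix

end HHAux

namespace HHAux

section Iter

variable {K C D : Type} [Field K]
variable [AddCommGroup C] [Module K C] [Coalgebra K C]
variable [AddCommGroup D] [Module K D]
variable (ρ : CoactionStruct K C D)

lemma assoc_rT_lT {V W : Type} [AddCommGroup V] [Module K V] [AddCommGroup W] [Module K W]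
    (g : V →ₗ[K] W) :
    (TensorProduct.assoc K C C W).toLinearMap
        ∘ₗ LinearMap.rTensor W (Coalgebra.comul (R := K) (A := C))
        ∘ₗ LinearMap.lTensor C g
      = LinearMap.lTensor C (LinearMap.lTensor C g)
        ∘ₗ (TensorProduct.assoc K C C V).toLinearMap
        ∘ₗ LinearMap.rTensor V (Coalgebra.comul (R := K) (A := C)) := by
  apply TensorProduct.ext'
  intro c v
  simp only [LinearMap.comp_apply, LinearMap.lTensor_tmul, LinearMap.rTensor_tmul]
  induction (Coalgebra.comul (R := K) c) using TensorProduct.induction_on with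
  | zero => simp
  | tmul c1 c2 => simp
  | add x y hx hy => simp only [TensorProduct.add_tmul, map_add, hx, hy]

lemma coactIter_succ (k : ℕ) :
    coactIter K C D ρ (k+1)
      = LinearMap.lTensor C (coactIter K C D ρ k) ∘ₗ ρ.δ := by
  induction k with
  | zero =>
      show comulIterTail K C D 0 ∘ₗ ρ.δ = _
      rw [show comulIterTail K C D 0 = LinearMap.id from rfl,
        show coactIter K C D ρ 0 = LinearMap.id from rfl]
      erw [LinearMap.lTensor_id]
      rfl
  | succ k ih =>
      show comulIterTail K C D (k+1) ∘ₗ ρ.δ = _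
      have h1 : comulIterTail K C D (k+1) ∘ₗ ρ.δ
          = ((TensorProduct.assoc K C C (TD K C D k)).toLinearMap
              ∘ₗ LinearMap.rTensor (TD K C D k) (Coalgebra.comul (R := K) (A := C)))
            ∘ₗ coactIter K C D ρ (k+1) := by
        rw [show comulIterTail K C D (k+1)
            = ((TensorProduct.assoc K C C (TD K C D k)).toLinearMap ∘ₗ
              (Coalgebra.comul (R := K) (A := C)).rTensor (TD K C D k)) ∘ₗ
              comulIterTail K C D k from rfl]
        rfl
      rw [h1, ih]
      have h2 : ((TensorProduct.assoc K C C (TD K C D k)).toLinearMap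
            ∘ₗ LinearMap.rTensor (TD K C D k) (Coalgebra.comul (R := K) (A := C)))
            ∘ₗ LinearMap.lTensor C (coactIter K C D ρ k) ∘ₗ ρ.δ
          = (LinearMap.lTensor C (LinearMap.lTensor C (coactIter K C D ρ k))
              ∘ₗ (TensorProduct.assoc K C C D).toLinearMap
              ∘ₗ LinearMap.rTensor D (Coalgebra.comul (R := K) (A := C))) ∘ₗ ρ.δ := by
        rw [← LinearMap.comp_assoc]
        rw [show ((TensorProduct.assoc K C C (TD K C D k)).toLinearMap
            ∘ₗ LinearMap.rTensor (TD K C D k) (Coalgebra.comul (R := K) (A := C)))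
            ∘ₗ LinearMap.lTensor C (coactIter K C D ρ k)
          = (TensorProduct.assoc K C C (TD K C D k)).toLinearMap
            ∘ₗ LinearMap.rTensor (TD K C D k) (Coalgebra.comul (R := K) (A := C))
            ∘ₗ LinearMap.lTensor C (coactIter K C D ρ k) from (LinearMap.comp_assoc _ _ _)]
        rw [assoc_rT_lT]
      rw [h2]
      simp only [LinearMap.comp_assoc]
      rw [ρ.coassoc]
      exact congrArg (· ∘ₗ ρ.δ) (LinearMap.lTensor_comp (M := C)
        (g := LinearMap.lTensor C (coactIter K C D ρ k)) (f := ρ.δ)).symm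

end Iter

end HHAux

namespace HHAux

section TOps

variable {K B N : Type} [Field K] [CommRing B] [Algebra K B]
  [AddCommGroup N] [Module K N] [Module B N] [IsScalarTower K B N] [SMulCommClass K B N]

lemma tprodCons_tprod (k : ℕ) (b : B) (v : Fin k → B) :
    tprodCons K B k b (PiTensorProduct.tprod K v) = PiTensorProduct.tprod K (Fin.cons b v) := by
  simp [tprodCons, MultilinearMap.curryLeft_apply]

lemma update_family_apply {k : ℕ} (j : Fin k) (g : B →ₗ[K] B) (v : Fin k → B) :
    (fun i => (Function.update (fun _ : Fin k => (LinearMap.id : B →ₗ[K] B)) j g i) (v i))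
      = Function.update v j (g (v j)) := by
  funext i
  by_cases h : i = j
  · subst h; simp
  · simp [Function.update_of_ne h]

noncomputable def mulAt (k : ℕ) (j : Fin k) :
    B →ₗ[K] (⨂[K] (_ : Fin k), B) →ₗ[K] ⨂[K] (_ : Fin k), B where
  toFun b := PiTensorProduct.map
    (Function.update (fun _ => LinearMap.id) j ((LinearMap.mul K B) b))
  map_add' b b' := by
    apply PiTensorProduct.ext
    apply MultilinearMap.ext
    intro v
    simp only [LinearMap.compMultilinearMap_apply, PiTensorProduct.map_tprod,
      LinearMap.add_apply, update_family_apply, LinearMap.mul_apply', add_mul]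
    exact MultilinearMap.map_update_add _ v j _ _
  map_smul' r b := by
    apply PiTensorProduct.ext
    apply MultilinearMap.ext
    intro v
    simp only [LinearMap.compMultilinearMap_apply, PiTensorProduct.map_tprod,
      LinearMap.smul_apply, update_family_apply, LinearMap.mul_apply', smul_mul_assoc,
      RingHom.id_apply]
    exact MultilinearMap.map_update_smul _ v j _ _

lemma mulAt_tprod (k : ℕ) (j : Fin k) (b : B) (v : Fin k → B) :
    mulAt k j b (PiTensorProduct.tprod K v)
      = PiTensorProduct.tprod K (Function.update v j (b * v j)) := by
  simp only [mulAt, LinearMap.coe_mk, AddHom.coe_mk, PiTensorProduct.map_tprod,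
    update_family_apply, LinearMap.mul_apply']

/-- Prepend a factor to the tensor side of `N ⊗ B^{⊗k}`. -/
noncomputable def TconsN (k : ℕ) :
    B →ₗ[K] (N ⊗[K] (⨂[K] (_ : Fin k), B)) →ₗ[K] N ⊗[K] (⨂[K] (_ : Fin (k+1)), B) :=
  TensorProduct.mapBilinear (σ₁₂ := RingHom.id K) (M := N) (N := ⨂[K] (_ : Fin k), B) (M₂ := N)
    (N₂ := ⨂[K] (_ : Fin (k+1)), B)
    LinearMap.id ∘ₗ tprodCons K B k

/-- Scalar action on the `N`-factor of `N ⊗ B^{⊗k}`. -/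
noncomputable def TsmulN (k : ℕ) :
    B →ₗ[K] (N ⊗[K] (⨂[K] (_ : Fin k), B)) →ₗ[K] N ⊗[K] (⨂[K] (_ : Fin k), B) :=
  (TensorProduct.mapBilinear (σ₁₂ := RingHom.id K) (M := N) (N := ⨂[K] (_ : Fin k), B) (M₂ := N)
    (N₂ := ⨂[K] (_ : Fin k), B)).flip
    LinearMap.id ∘ₗ lsmulKB K B N

/-- Multiplication into the `j`-th tensor slot of `N ⊗ B^{⊗k}`. -/
noncomputable def TmulAtN (k : ℕ) (j : Fin k) :
    B →ₗ[K] (N ⊗[K] (⨂[K] (_ : Fin k), B)) →ₗ[K] N ⊗[K] (⨂[K] (_ : Fin k), B) :=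
  TensorProduct.mapBilinear (σ₁₂ := RingHom.id K) (M := N) (N := ⨂[K] (_ : Fin k), B) (M₂ := N)
    (N₂ := ⨂[K] (_ : Fin k), B)
    LinearMap.id ∘ₗ mulAt k j

lemma TconsN_apply (k : ℕ) (b : B) :
    TconsN (K := K) (B := B) (N := N) k b = TensorProduct.map LinearMap.id (tprodCons K B k b) := by
  simp [TconsN, TensorProduct.mapBilinear_apply]

lemma TsmulN_apply (k : ℕ) (b : B) :
    TsmulN (K := K) (B := B) (N := N) k b = TensorProduct.map (lsmulKB K B N b) LinearMap.id := by
  simp [TsmulN, TensorProduct.mapBilinear_apply]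

lemma TmulAtN_apply (k : ℕ) (j : Fin k) (b : B) :
    TmulAtN (K := K) (B := B) (N := N) k j b = TensorProduct.map LinearMap.id (mulAt k j b) := by
  simp [TmulAtN, TensorProduct.mapBilinear_apply]

lemma smul_cons_comm (k : ℕ) (b b' : B) :
    TsmulN (K := K) (B := B) (N := N) (k+1) b ∘ₗ TconsN (K := K) (B := B) (N := N) k b'
      = TconsN (K := K) (B := B) (N := N) k b' ∘ₗ TsmulN (K := K) (B := B) (N := N) k b := by
  simp only [TsmulN_apply, TconsN_apply]
  rw [← TensorProduct.map_comp, ← TensorProduct.map_comp, LinearMap.comp_id,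
    LinearMap.id_comp, LinearMap.comp_id, LinearMap.id_comp]

lemma cons_mul (k : ℕ) (b b' : B) :
    TconsN (K := K) (B := B) (N := N) k (b * b') = TmulAtN (K := K) (B := B) (N := N) (k+1) 0 b' ∘ₗ TconsN (K := K) (B := B) (N := N) k b := by
  simp only [TconsN_apply, TmulAtN_apply]
  rw [← TensorProduct.map_comp, LinearMap.id_comp]
  congr 1
  · apply PiTensorProduct.ext
    apply MultilinearMap.ext
    intro v
    simp only [LinearMap.compMultilinearMap_apply, LinearMap.comp_apply, tprodCons_tprod,
      mulAt_tprod, Fin.cons_zero, Fin.update_cons_zero]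
    rw [mul_comm b b']

lemma mulAt_succ_cons (k : ℕ) (j : Fin k) (b b' : B) :
    TmulAtN (K := K) (B := B) (N := N) (k+1) j.succ b ∘ₗ TconsN (K := K) (B := B) (N := N) k b'
      = TconsN (K := K) (B := B) (N := N) k b' ∘ₗ TmulAtN (K := K) (B := B) (N := N) k j b := by
  simp only [TconsN_apply, TmulAtN_apply]
  rw [← TensorProduct.map_comp, ← TensorProduct.map_comp]
  congr 1
  · apply PiTensorProduct.ext
    apply MultilinearMap.ext
    intro v
    simp only [LinearMap.compMultilinearMap_apply, LinearMap.comp_apply, tprodCons_tprod,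
      mulAt_tprod, Fin.cons_succ]
    rw [← Fin.cons_update]

lemma mulAt_mul (k : ℕ) (j : Fin k) (b b' : B) :
    TmulAtN (K := K) (B := B) (N := N) k j (b * b') = TmulAtN (K := K) (B := B) (N := N) k j b' ∘ₗ TmulAtN (K := K) (B := B) (N := N) k j b := by
  simp only [TmulAtN_apply]
  rw [← TensorProduct.map_comp, LinearMap.id_comp]
  congr 1
  · apply PiTensorProduct.ext
    apply MultilinearMap.ext
    intro v
    simp only [LinearMap.compMultilinearMap_apply, LinearMap.comp_apply, mulAt_tprod,
      Function.update_idem, Function.update_self]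
    congr 1
    funext i
    by_cases h : i = j
    · subst h; simp [Function.update_self]; ring
    · simp [Function.update_of_ne h]

lemma smul_mul (k : ℕ) (b b' : B) :
    TsmulN (K := K) (B := B) (N := N) k (b * b') = TsmulN (K := K) (B := B) (N := N) k b' ∘ₗ TsmulN (K := K) (B := B) (N := N) k b := by
  simp only [TsmulN_apply]
  rw [← TensorProduct.map_comp, LinearMap.id_comp]
  congr 1
  ext n
  simp [lsmulKB, LinearMap.mk₂_apply, mul_smul, mul_comm b b']

end TOps

end HHAux

namespace HHAux

section Meas

variable {K A B C D M N : Type} [Field K]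
    [CommRing A] [Algebra K A] [CommRing B] [Algebra K B]
    [AddCommGroup C] [Module K C] [Coalgebra K C]
    [AddCommGroup D] [Module K D]
    [AddCommGroup M] [Module K M] [Module A M] [IsScalarTower K A M] [SMulCommClass K A M]
    [AddCommGroup N] [Module K N] [Module B N] [IsScalarTower K B N] [SMulCommClass K B N]

variable (ψ : C →ₗ[K] A →ₗ[K] B) (ρ : CoactionStruct K C D) (φ : D →ₗ[K] M →ₗ[K] N)

/-- The Sweedler-type chain-level map evaluated along the iterated coaction. -/
noncomputable def Ev (k : ℕ) (m : M) (a : Fin k → A) : D →ₗ[K] Lob K B N k :=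
  measurePair K A B C D M N ψ φ k m a ∘ₗ coactIter K C D ρ k

lemma Ev_zero (m : M) (a : Fin 0 → A) :
    Ev ψ ρ φ 0 m a
      = (TensorProduct.mk K N (⨂[K] (_ : Fin 0), B)).flip
          (PiTensorProduct.tprod K fun _ => (1:B)) ∘ₗ φ.flip m := by
  rfl

lemma Ev_succ (k : ℕ) (m : M) (a : Fin (k+1) → A) :
    Ev ψ ρ φ (k+1) m a
      = mix ρ (TconsN (K := K) (B := B) (N := N) k) (ψ.flip (a 0))
          (Ev ψ ρ φ k m (a ∘ Fin.succ)) := by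
  unfold Ev mix
  rw [coactIter_succ]
  erw [← LinearMap.comp_assoc]
  simp only [measurePair]
  erw [lift_lTensor]
  congr 1

lemma psi_one (hψ : IsMeasuring K A B C ψ) :
    ψ.flip (1 : A)
      = LinearMap.toSpanSingleton K B 1 ∘ₗ (Coalgebra.counit (R := K) (A := C)) := by
  ext c
  simp [hψ.measures_one c, LinearMap.toSpanSingleton_apply]

lemma psi_mul (hψ : IsMeasuring K A B C ψ) (x y : A) :
    ψ.flip (x * y) = conv (ψ.flip x) (ψ.flip y) := by
  ext c
  simpa [conv] using hψ.measures_mul c x y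

lemma phi_smul (hφ : IsComodMeasuring K A B C D M N ψ ρ φ) (x : A) (m : M) :
    φ.flip (x • m) = A1 ρ (mixF (lsmulKB K B N) (ψ.flip x) (φ.flip m)) := by
  ext d
  rw [LinearMap.flip_apply, A1_apply, hφ.measures d x m]
  have h : (lsmulKB K B N).compl₁₂ (ψ.flip x) (φ.flip m)
      = mixF (lsmulKB K B N) (ψ.flip x) (φ.flip m) := by
    ext c d'
    simp [mixF_apply, LinearMap.compl₁₂_apply, LinearMap.flip_apply]
  rw [h]

lemma Ev_one (hψ : IsMeasuring K A B C ψ) (l : ℕ) (m : M) :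
    Ev ψ ρ φ l m (fun _ => (1:A))
      = (TensorProduct.mk K N (⨂[K] (_ : Fin l), B)).flip
          (PiTensorProduct.tprod K fun _ => (1:B)) ∘ₗ φ.flip m := by
  induction l with
  | zero => exact Ev_zero ψ ρ φ m _
  | succ l ih =>
      rw [Ev_succ, show ((fun _ => (1:A)) ∘ Fin.succ) = fun _ : Fin l => (1:A) from rfl, ih,
        psi_one ψ hψ, mix_unit]
      have hc : (Fin.cons (1:B) (fun _ : Fin l => (1:B))) = fun _ : Fin (l+1) => (1:B) := by
        funext i
        induction i using Fin.cases <;> simp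
      ext d
      simp only [LinearMap.comp_apply, LinearMap.flip_apply, TensorProduct.mk_apply,
        TconsN_apply, TensorProduct.map_tmul, LinearMap.id_coe, id_eq, tprodCons_tprod, hc]

lemma update_comp_succ {l : ℕ} {α : Type} (a : Fin (l+1) → α) (j : Fin l) (v : α) :
    (Function.update a j.succ v) ∘ Fin.succ = Function.update (a ∘ Fin.succ) j v := by
  funext i
  by_cases h : i = j
  · subst h; simp
  · simp [Function.comp_apply, Function.update_of_ne h,
      Function.update_of_ne (fun hc => h (Fin.succ_injective _ hc))]

lemma update_zero_comp_succ {l : ℕ} {α : Type} (a : Fin (l+1) → α) (v : α) :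
    (Function.update a 0 v) ∘ Fin.succ = a ∘ Fin.succ := by
  funext i
  simp [Function.comp_apply, Function.update_of_ne (Fin.succ_ne_zero i)]

/-- Absorbing a scalar factor into the module part, through the coaction. -/
lemma mix_smul (hco : IsCocommutative K C)
    (hφ : IsComodMeasuring K A B C D M N ψ ρ φ)
    (l : ℕ) (x : A) (m : M) (a : Fin l → A) :
    mix ρ (TsmulN (K := K) (B := B) (N := N) l) (ψ.flip x) (Ev ψ ρ φ l m a)
      = Ev ψ ρ φ l (x • m) a := by
  induction l with
  | zero =>
      rw [Ev_zero, Ev_zero, phi_smul ψ ρ φ hφ, comp_A1]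
      unfold mix
      congr 1
      try
        ext c d
        simp [mixF_apply, TsmulN_apply, LinearMap.compr₂_apply, TensorProduct.map_tmul]
  | succ l ih =>
      rw [Ev_succ, Ev_succ,
        swap_mix ρ hco _ _ _ _ _ _ _ (fun b b' => smul_cons_comm (K := K) l b b'), ih]

/-- Absorbing a multiplicative factor into the `j`-th slot, through the coaction. -/
lemma mix_mulAt (hco : IsCocommutative K C) (hψ : IsMeasuring K A B C ψ)
    (l : ℕ) (j : Fin l) (x : A) (m : M) (a : Fin l → A) :
    mix ρ (TmulAtN (K := K) (B := B) (N := N) l j) (ψ.flip x) (Ev ψ ρ φ l m a)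
      = Ev ψ ρ φ l m (Function.update a j (x * a j)) := by
  induction l with
  | zero => exact j.elim0
  | succ l ih =>
      induction j using Fin.cases with
      | zero =>
          rw [Ev_succ ψ ρ φ l m (Function.update a 0 (x * a 0)),
            update_zero_comp_succ, Function.update_self,
            show x * a 0 = a 0 * x from mul_comm x (a 0),
            psi_mul ψ hψ (a 0) x,
            conv_mix ρ hco _ _ _ _ _ (fun b b' => cons_mul (K := K) l b b'),
            ← Ev_succ]
      | succ j =>
          rw [Ev_succ, Ev_succ ψ ρ φ l m (Function.update a j.succ (x * a j.succ)),
            swap_mix ρ hco _ _ _ _ _ _ _ (fun b b' => mulAt_succ_cons (K := K) l j b b'),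
            update_comp_succ,
            Function.update_of_ne (Ne.symm (Fin.succ_ne_zero j)) _ a]
          rw [show (Function.update (a ∘ Fin.succ) j (x * a j.succ))
              = (Function.update (a ∘ Fin.succ) j (x * (a ∘ Fin.succ) j)) from rfl]
          rw [ih]

end Meas

end HHAux

namespace HHAux

section Gamma

/-- `0 ↦ 0`, `i+1 ↦ i+2` : skipping the element `1` of the source. -/
def dshift (k : ℕ) : Fin (k+1) → Fin (k+2) := Fin.cases 0 (fun i => i.succ.succ)

/-- Restriction of `f` along `dshift` (forgetting the source element `1`). -/
def gres {k l : ℕ} (f : GammaHom (k+1) l) : GammaHom k l :=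
  ⟨fun x => f.toFun (dshift k x), by simp [dshift, f.map_zero]⟩

/-- `0 ↦ 0`, `y+1 ↦ y+2` : skipping the element `1` of the target. -/
def tshift (l : ℕ) : Fin (l+1) → Fin (l+2) := Fin.cases 0 (fun y => y.succ.succ)

/-- Extension of `f` sending the source element `1` to the fresh target element `1`. -/
def fplus {k l : ℕ} (f : GammaHom k l) : GammaHom (k+1) (l+1) :=
  ⟨Fin.cases 0 (Fin.cases 1 (fun x => tshift l (f.toFun x.succ))), by simp⟩

/-- The map `[l+1] → [l]` fixing `0`, sending `1 ↦ j` and `y+2 ↦ y+1`. -/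
def hmap (l : ℕ) (j : Fin (l+1)) : GammaHom (l+1) l :=
  ⟨Fin.cases 0 (Fin.cases j (fun y => y.succ)), by simp⟩

lemma gres_toFun {k l : ℕ} (f : GammaHom (k+1) l) (x : Fin k) :
    (gres f).toFun x.succ = f.toFun x.succ.succ := by
  simp [gres, dshift]

lemma fplus_one {k l : ℕ} (f : GammaHom k l) :
    (fplus f).toFun 1 = 1 := by
  rw [show (fplus f).toFun
      = Fin.cases 0 (Fin.cases 1 (fun x => tshift l (f.toFun x.succ))) from rfl,
    show (1 : Fin (k+2)) = (0 : Fin (k+1)).succ from (Fin.succ_zero_eq_one).symm]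
  simp only [Fin.cases_succ, Fin.cases_zero]

lemma fplus_ss {k l : ℕ} (f : GammaHom k l) (x : Fin k) :
    (fplus f).toFun x.succ.succ = tshift l (f.toFun x.succ) := by
  simp [fplus]

lemma hmap_one (l : ℕ) (j : Fin (l+1)) : (hmap l j).toFun 1 = j := by
  rw [show (hmap l j).toFun = Fin.cases 0 (Fin.cases j (fun y => y.succ)) from rfl,
    show (1 : Fin (l+2)) = (0 : Fin (l+1)).succ from (Fin.succ_zero_eq_one).symm]
  simp only [Fin.cases_succ, Fin.cases_zero]

lemma hmap_ss (l : ℕ) (j : Fin (l+1)) (y : Fin l) :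
    (hmap l j).toFun y.succ.succ = y.succ := by
  simp [hmap]

lemma tshift_eq_zero_iff (l : ℕ) (y : Fin (l+1)) : tshift l y = 0 ↔ y = 0 := by
  induction y using Fin.cases with
  | zero => simp [tshift]
  | succ z => simp [tshift, Fin.succ_ne_zero]

lemma tshift_ne_one (l : ℕ) (y : Fin (l+1)) : tshift l y ≠ 1 := by
  induction y using Fin.cases with
  | zero =>
      simp only [tshift, Fin.cases_zero]
      exact fun h => one_ne_zero h.symm
  | succ z =>
      simp only [tshift, Fin.cases_succ]
      rw [show (1 : Fin (l+2)) = (0 : Fin (l+1)).succ from (Fin.succ_zero_eq_one).symm]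
      intro h
      exact Fin.succ_ne_zero z (Fin.succ_injective _ h)

lemma tshift_eq_ss_iff (l : ℕ) (y : Fin (l+1)) (z : Fin l) :
    tshift l y = z.succ.succ ↔ y = z.succ := by
  induction y using Fin.cases with
  | zero => simp [tshift, Ne.symm (Fin.succ_ne_zero _), Ne.symm (Fin.succ_ne_zero z)]
  | succ w => simp [tshift, Fin.succ_inj]

lemma hmap_decomp {k l : ℕ} (f : GammaHom (k+1) l) :
    f = (hmap l (f.toFun 1)).comp (fplus (gres f)) := by
  apply GammaHom.ext
  funext x
  show f.toFun x = (hmap l (f.toFun 1)).toFun ((fplus (gres f)).toFun x)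
  induction x using Fin.cases with
  | zero =>
      rw [f.map_zero, (fplus (gres f)).map_zero, (hmap l (f.toFun 1)).map_zero]
  | succ x =>
      induction x using Fin.cases with
      | zero =>
          rw [Fin.succ_zero_eq_one, fplus_one, hmap_one]
      | succ x =>
          rw [fplus_ss, gres_toFun]
          rcases Fin.eq_zero_or_eq_succ (f.toFun x.succ.succ) with h | ⟨y, h⟩
          · rw [h, show tshift l 0 = 0 from rfl, (hmap l (f.toFun 1)).map_zero]
          · rw [h, show tshift l y.succ = y.succ.succ from rfl, hmap_ss]

section Prod
variable {α : Type} [CommMonoid α]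

lemma fiber0_prod {k l : ℕ} (f : GammaHom k l) (a : Fin k → α) :
    ∏ i ∈ fiber0 f, a i = ∏ i : Fin k, (if f.toFun i.succ = 0 then a i else 1) := by
  rw [fiber0, Finset.prod_filter]

lemma fiber_prod {k l : ℕ} (j : Fin l) (f : GammaHom k l) (a : Fin k → α) :
    ∏ i ∈ fiber f j, a i = ∏ i : Fin k, (if f.toFun i.succ = j.succ then a i else 1) := by
  rw [fiber, Finset.prod_filter]

lemma fiber0_prod_succ {k l : ℕ} (f : GammaHom (k+1) l) (a : Fin (k+1) → α) :
    ∏ i ∈ fiber0 f, a i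
      = (if f.toFun 1 = 0 then a 0 else 1) * ∏ i ∈ fiber0 (gres f), (a ∘ Fin.succ) i := by
  rw [fiber0_prod, fiber0_prod, Fin.prod_univ_succ, Fin.succ_zero_eq_one]
  congr 1

lemma fiber_prod_succ {k l : ℕ} (j : Fin l) (f : GammaHom (k+1) l) (a : Fin (k+1) → α) :
    ∏ i ∈ fiber f j, a i
      = (if f.toFun 1 = j.succ then a 0 else 1) * ∏ i ∈ fiber (gres f) j, (a ∘ Fin.succ) i := by
  rw [fiber_prod, fiber_prod, Fin.prod_univ_succ, Fin.succ_zero_eq_one]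
  congr 1

lemma fiber0_fplus {k l : ℕ} (f : GammaHom k l) (c : α) (b : Fin k → α) :
    ∏ i ∈ fiber0 (fplus f), (Fin.cons c b : Fin (k+1) → α) i = ∏ i ∈ fiber0 f, b i := by
  rw [fiber0_prod, fiber0_prod, Fin.prod_univ_succ, Fin.succ_zero_eq_one, fplus_one,
    if_neg (by exact one_ne_zero)]
  rw [one_mul]
  apply Finset.prod_congr rfl
  intro x _
  rw [fplus_ss, Fin.cons_succ]
  by_cases h : f.toFun x.succ = 0
  · rw [if_pos h, if_pos ((tshift_eq_zero_iff l _).mpr h)]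
  · rw [if_neg h, if_neg (fun hc => h ((tshift_eq_zero_iff l _).mp hc))]

lemma fiber_fplus_zero {k l : ℕ} (f : GammaHom k l) (c : α) (b : Fin k → α) :
    ∏ i ∈ fiber (fplus f) 0, (Fin.cons c b : Fin (k+1) → α) i = c := by
  rw [fiber_prod, Fin.prod_univ_succ, Fin.succ_zero_eq_one, fplus_one, Fin.succ_zero_eq_one,
    if_pos rfl, Fin.cons_zero]
  rw [show ∏ i : Fin k, _ = (1 : α) from Finset.prod_eq_one (fun x _ => ?_), mul_one]
  rw [fplus_ss, if_neg (tshift_ne_one l _)]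

lemma fiber_fplus_succ {k l : ℕ} (f : GammaHom k l) (y : Fin l) (c : α) (b : Fin k → α) :
    ∏ i ∈ fiber (fplus f) y.succ, (Fin.cons c b : Fin (k+1) → α) i
      = ∏ i ∈ fiber f y, b i := by
  rw [fiber_prod, fiber_prod, Fin.prod_univ_succ, Fin.succ_zero_eq_one, fplus_one]
  rw [if_neg (by
    intro h
    rw [show (1 : Fin (l+2)) = (0 : Fin (l+1)).succ from (Fin.succ_zero_eq_one).symm] at h
    exact Fin.succ_ne_zero y (Fin.succ_injective _ h).symm), one_mul]
  apply Finset.prod_congr rfl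
  intro x _
  rw [fplus_ss, Fin.cons_succ]
  by_cases h : f.toFun x.succ = y.succ
  · rw [if_pos h, if_pos ((tshift_eq_ss_iff l _ y).mpr h)]
  · rw [if_neg h, if_neg (fun hc => h ((tshift_eq_ss_iff l _ y).mp hc))]

lemma fiber0_hmap_zero {l : ℕ} (c : α) (b : Fin l → α) :
    ∏ i ∈ fiber0 (hmap l 0), (Fin.cons c b : Fin (l+1) → α) i = c := by
  rw [fiber0_prod, Fin.prod_univ_succ, Fin.succ_zero_eq_one, hmap_one, if_pos rfl,
    Fin.cons_zero]
  rw [show ∏ i : Fin l, _ = (1 : α) from Finset.prod_eq_one (fun x _ => ?_), mul_one]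
  rw [hmap_ss, if_neg (Fin.succ_ne_zero x)]

lemma fiber_hmap_zero {l : ℕ} (y : Fin l) (c : α) (b : Fin l → α) :
    ∏ i ∈ fiber (hmap l 0) y, (Fin.cons c b : Fin (l+1) → α) i = b y := by
  rw [fiber_prod, Fin.prod_univ_succ, Fin.succ_zero_eq_one, hmap_one,
    if_neg (Ne.symm (Fin.succ_ne_zero y)), one_mul]
  rw [show ∏ i : Fin l, _ = b y from ?_]
  have h1 : ∀ x : Fin l,
      (if (hmap l 0).toFun x.succ.succ = y.succ then (Fin.cons c b : Fin (l+1) → α) x.succ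
        else 1) = (if x = y then b x else 1) := by
    intro x
    rw [hmap_ss, Fin.cons_succ]
    by_cases h : x = y
    · rw [if_pos (by rw [h]), if_pos h]
    · rw [if_neg (fun hc => h (Fin.succ_injective _ hc)), if_neg h]
  rw [show (fun x : Fin l => if (hmap l 0).toFun x.succ.succ = y.succ
      then (Fin.cons c b : Fin (l+1) → α) x.succ else 1) = fun x => if x = y then b x else 1
    from funext h1]
  exact (Finset.prod_ite_eq' Finset.univ y b).trans (if_pos (Finset.mem_univ y))

lemma fiber0_hmap_succ {l : ℕ} (j : Fin l) (c : α) (b : Fin l → α) :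
    ∏ i ∈ fiber0 (hmap l j.succ), (Fin.cons c b : Fin (l+1) → α) i = 1 := by
  rw [fiber0_prod]
  apply Finset.prod_eq_one
  intro x _
  induction x using Fin.cases with
  | zero => rw [Fin.succ_zero_eq_one, hmap_one, if_neg (Fin.succ_ne_zero j)]
  | succ x => rw [hmap_ss, if_neg (Fin.succ_ne_zero x)]

lemma fiber_hmap_succ {l : ℕ} (j : Fin l) (y : Fin l) (c : α) (b : Fin l → α) :
    ∏ i ∈ fiber (hmap l j.succ) y, (Fin.cons c b : Fin (l+1) → α) i
      = (if y = j then c else 1) * b y := by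
  rw [fiber_prod, Fin.prod_univ_succ, Fin.succ_zero_eq_one, hmap_one, Fin.cons_zero]
  have h2 : ((j.succ : Fin (l+1)) = y.succ) ↔ (y = j) := by
    rw [Fin.succ_inj]
    exact eq_comm
  congr 1
  · by_cases h : y = j
    · rw [if_pos (h2.mpr h), if_pos h]
    · rw [if_neg (fun hc => h (h2.mp hc)), if_neg h]
  · have h1 : ∀ x : Fin l,
        (if (hmap l j.succ).toFun x.succ.succ = y.succ then (Fin.cons c b : Fin (l+1) → α) x.succ
          else 1) = (if x = y then b x else 1) := by
      intro x
      rw [hmap_ss, Fin.cons_succ]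
      by_cases h : x = y
      · rw [if_pos (by rw [h]), if_pos h]
      · rw [if_neg (fun hc => h (Fin.succ_injective _ hc)), if_neg h]
    rw [show (fun x : Fin l => if (hmap l j.succ).toFun x.succ.succ = y.succ
        then (Fin.cons c b : Fin (l+1) → α) x.succ else 1) = fun x => if x = y then b x else 1
      from funext h1]
    exact (Finset.prod_ite_eq' Finset.univ y b).trans (if_pos (Finset.mem_univ y))

end Prod

end Gamma

end HHAux

namespace HHAux

section KeySec

variable {K A B C D M N : Type} [Field K]
    [CommRing A] [Algebra K A] [CommRing B] [Algebra K B]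
    [AddCommGroup C] [Module K C] [Coalgebra K C]
    [AddCommGroup D] [Module K D]
    [AddCommGroup M] [Module K M] [Module A M] [IsScalarTower K A M] [SMulCommClass K A M]
    [AddCommGroup N] [Module K N] [Module B N] [IsScalarTower K B N] [SMulCommClass K B N]

variable (ψ : C →ₗ[K] A →ₗ[K] B) (ρ : CoactionStruct K C D) (φ : D →ₗ[K] M →ₗ[K] N)

variable (G : ∀ k l : ℕ, GammaHom k l → (Lob K B N k →ₗ[K] Lob K B N l))
variable (hG : ∀ (k l : ℕ) (f : GammaHom k l) (n : N) (b : Fin k → B),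
    G k l f (n ⊗ₜ[K] PiTensorProduct.tprod K b) = lodayElt K B N f n b)

include hG

lemma G_fplus {k l : ℕ} (f : GammaHom k l) (c : B) :
    G (k+1) (l+1) (fplus f) ∘ₗ TconsN (K := K) (B := B) (N := N) k c
      = TconsN (K := K) (B := B) (N := N) l c ∘ₗ G k l f := by
  apply TensorProduct.ext'
  intro n x
  induction x using PiTensorProduct.induction_on with
  | smul_tprod r b =>
      simp only [TensorProduct.tmul_smul, map_smul]
      congr 1
      simp only [LinearMap.comp_apply, TconsN_apply, TensorProduct.map_tmul,
        LinearMap.id_coe, id_eq, tprodCons_tprod, hG, lodayElt]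
      rw [fiber0_fplus f c b]
      rw [show (fun j : Fin (l+1) => ∏ i ∈ fiber (fplus f) j, (Fin.cons c b : Fin (k+1) → B) i)
          = Fin.cons c (fun y : Fin l => ∏ i ∈ fiber f y, b i) from funext fun j => by
        induction j using Fin.cases with
        | zero => rw [fiber_fplus_zero f c b, Fin.cons_zero]
        | succ y => rw [fiber_fplus_succ f y c b, Fin.cons_succ]]
  | add x y hx hy =>
      simp only [TensorProduct.tmul_add, map_add, hx, hy]

lemma G_hzero (l : ℕ) (c : B) :
    G (l+1) l (hmap l 0) ∘ₗ TconsN (K := K) (B := B) (N := N) l c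
      = TsmulN (K := K) (B := B) (N := N) l c := by
  apply TensorProduct.ext'
  intro n x
  induction x using PiTensorProduct.induction_on with
  | smul_tprod r b =>
      simp only [TensorProduct.tmul_smul, map_smul]
      congr 1
      simp only [LinearMap.comp_apply, TconsN_apply, TsmulN_apply, TensorProduct.map_tmul,
        LinearMap.id_coe, id_eq, tprodCons_tprod, hG, lodayElt]
      rw [fiber0_hmap_zero c b]
      rw [show (fun y : Fin l => ∏ i ∈ fiber (hmap l 0) y, (Fin.cons c b : Fin (l+1) → B) i)
          = b from funext fun y => fiber_hmap_zero y c b]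
      rfl
  | add x y hx hy =>
      simp only [TensorProduct.tmul_add, map_add, hx, hy]

lemma G_hsucc (l : ℕ) (j : Fin l) (c : B) :
    G (l+1) l (hmap l j.succ) ∘ₗ TconsN (K := K) (B := B) (N := N) l c
      = TmulAtN (K := K) (B := B) (N := N) l j c := by
  apply TensorProduct.ext'
  intro n x
  induction x using PiTensorProduct.induction_on with
  | smul_tprod r b =>
      simp only [TensorProduct.tmul_smul, map_smul]
      congr 1
      simp only [LinearMap.comp_apply, TconsN_apply, TmulAtN_apply, TensorProduct.map_tmul,
        LinearMap.id_coe, id_eq, tprodCons_tprod, mulAt_tprod, hG, lodayElt]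
      rw [fiber0_hmap_succ j c b, one_smul]
      rw [show (fun y : Fin l => ∏ i ∈ fiber (hmap l j.succ) y, (Fin.cons c b : Fin (l+1) → B) i)
          = Function.update b j (c * b j) from funext fun y => by
        rw [fiber_hmap_succ j y c b]
        by_cases h : y = j
        · subst h; rw [if_pos rfl, Function.update_self]
        · rw [if_neg h, one_mul, Function.update_of_ne h]]
  | add x y hx hy =>
      simp only [TensorProduct.tmul_add, map_add, hx, hy]

theorem key (hco : IsCocommutative K C) (hψ : IsMeasuring K A B C ψ)
    (hφ : IsComodMeasuring K A B C D M N ψ ρ φ)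
    (hGcomp : ∀ (k l p : ℕ) (f : GammaHom k l) (g : GammaHom l p),
        G k p (g.comp f) = (G l p g) ∘ₗ (G k l f)) :
    ∀ (k l : ℕ) (f : GammaHom k l) (m : M) (a : Fin k → A),
    G k l f ∘ₗ Ev ψ ρ φ k m a
      = Ev ψ ρ φ l ((∏ i ∈ fiber0 f, a i) • m) (fun j => ∏ i ∈ fiber f j, a i) := by
  intro k
  induction k with
  | zero =>
      intro l f m a
      have h0 : fiber0 f = (∅ : Finset (Fin 0)) := Finset.eq_empty_of_isEmpty _
      have h1 : ∀ j : Fin l, fiber f j = (∅ : Finset (Fin 0)) :=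
        fun j => Finset.eq_empty_of_isEmpty _
      rw [show (fun j : Fin l => ∏ i ∈ fiber f j, a i) = (fun _ => (1:A)) from
          funext fun j => by rw [h1 j, Finset.prod_empty],
        h0, Finset.prod_empty, one_smul, Ev_one ψ ρ φ hψ, Ev_zero]
      ext d
      simp only [LinearMap.comp_apply, LinearMap.flip_apply, TensorProduct.mk_apply, hG,
        lodayElt]
      have h0' : fiber0 f = (∅ : Finset (Fin 0)) := Finset.eq_empty_of_isEmpty _
      rw [h0', Finset.prod_empty, one_smul]
      congr 1
  | succ k ih =>
      intro l f m a
      have hdec : G (k+1) l f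
          = G (l+1) l (hmap l (f.toFun 1)) ∘ₗ G (k+1) (l+1) (fplus (gres f)) := by
        conv_lhs => rw [hmap_decomp f]
        rw [hGcomp]
      rw [hdec, LinearMap.comp_assoc, Ev_succ,
        push_mix ρ _ _ _ _ _ _ (fun b => G_fplus G hG (gres f) b),
        ih l (gres f) m (a ∘ Fin.succ)]
      rcases Fin.eq_zero_or_eq_succ (f.toFun 1) with h1 | ⟨j, h1⟩
      · rw [h1,
          push_mix ρ _ LinearMap.id _ _ _ _
            (fun b => (G_hzero G hG l b).trans (LinearMap.comp_id _).symm),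
          LinearMap.id_comp, mix_smul ψ ρ φ hco hφ]
        have hm : a 0 • ((∏ i ∈ fiber0 (gres f), (a ∘ Fin.succ) i) • m)
            = (∏ i ∈ fiber0 f, a i) • m := by
          rw [smul_smul, fiber0_prod_succ f a, h1, if_pos rfl]
        have ha : (fun j' : Fin l => ∏ i ∈ fiber (gres f) j', (a ∘ Fin.succ) i)
            = fun j' => ∏ i ∈ fiber f j', a i := funext fun j' => by
          rw [fiber_prod_succ j' f a, h1, if_neg (Ne.symm (Fin.succ_ne_zero j')), one_mul]
        rw [hm, ha]
      · rw [h1,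
          push_mix ρ _ LinearMap.id _ _ _ _
            (fun b => (G_hsucc G hG l j b).trans (LinearMap.comp_id _).symm),
          LinearMap.id_comp, mix_mulAt ψ ρ φ hco hψ]
        have hm : (∏ i ∈ fiber0 (gres f), (a ∘ Fin.succ) i) • m
            = (∏ i ∈ fiber0 f, a i) • m := by
          rw [fiber0_prod_succ f a, h1, if_neg (Fin.succ_ne_zero j), one_mul]
        have ha : Function.update
              (fun j' : Fin l => ∏ i ∈ fiber (gres f) j', (a ∘ Fin.succ) i) j
              (a 0 * ∏ i ∈ fiber (gres f) j, (a ∘ Fin.succ) i)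
            = fun j' => ∏ i ∈ fiber f j', a i := funext fun j' => by
          by_cases h : j' = j
          · subst h
            rw [Function.update_self, fiber_prod_succ j' f a, h1, if_pos rfl]
          · rw [Function.update_of_ne h, fiber_prod_succ j' f a, h1,
              if_neg (fun hc => h (Fin.succ_injective _ hc).symm), one_mul]
        rw [hm, ha]

end KeySec

end HHAux

namespace HHAux

section Eta

variable {K A B C D M N : Type} [Field K]
    [CommRing A] [Algebra K A] [CommRing B] [Algebra K B]
    [AddCommGroup C] [Module K C] [Coalgebra K C]
    [AddCommGroup D] [Module K D]
    [AddCommGroup M] [Module K M] [Module A M] [IsScalarTower K A M] [SMulCommClass K A M]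
    [AddCommGroup N] [Module K N] [Module B N] [IsScalarTower K B N] [SMulCommClass K B N]

variable (ψ : C →ₗ[K] A →ₗ[K] B) (ρ : CoactionStruct K C D) (φ : D →ₗ[K] M →ₗ[K] N)

lemma measurePair_add_m (k : ℕ) (m m' : M) (a : Fin k → A) :
    measurePair K A B C D M N ψ φ k (m + m') a
      = measurePair K A B C D M N ψ φ k m a + measurePair K A B C D M N ψ φ k m' a := by
  induction k with
  | zero =>
      simp only [measurePair, map_add]
      exact LinearMap.comp_add _ _ _
  | succ k ih =>
      apply TensorProduct.ext'
      intro s w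
      simp only [measurePair, TensorProduct.lift.tmul, LinearMap.comp_apply,
        LinearMap.llcomp_apply, LinearMap.flip_apply, LinearMap.add_apply, ih]
      erw [LinearMap.add_apply]
      simp only [TensorProduct.lift.tmul, LinearMap.comp_apply, LinearMap.llcomp_apply, LinearMap.flip_apply]
      simp [map_add]

lemma measurePair_smul_m (k : ℕ) (r : K) (m : M) (a : Fin k → A) :
    measurePair K A B C D M N ψ φ k (r • m) a
      = r • measurePair K A B C D M N ψ φ k m a := by
  induction k with
  | zero =>
      simp only [measurePair, map_smul]
      exact LinearMap.comp_smul _ _ _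
  | succ k ih =>
      apply TensorProduct.ext'
      intro s w
      simp only [measurePair, TensorProduct.lift.tmul, LinearMap.comp_apply,
        LinearMap.llcomp_apply, LinearMap.flip_apply, LinearMap.smul_apply, ih]
      erw [LinearMap.smul_apply]
      simp only [TensorProduct.lift.tmul, LinearMap.comp_apply, LinearMap.llcomp_apply, LinearMap.flip_apply]
      simp [map_smul]

lemma measurePair_update_add (k : ℕ) (m : M) (a : Fin k → A) (i : Fin k) (x y : A) :
    measurePair K A B C D M N ψ φ k m (Function.update a i (x + y))
      = measurePair K A B C D M N ψ φ k m (Function.update a i x)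
        + measurePair K A B C D M N ψ φ k m (Function.update a i y) := by
  induction k with
  | zero => exact i.elim0
  | succ k ih =>
      apply TensorProduct.ext'
      intro s w
      induction i using Fin.cases with
      | zero =>
          simp only [measurePair, TensorProduct.lift.tmul, LinearMap.comp_apply,
            LinearMap.llcomp_apply, LinearMap.flip_apply, LinearMap.add_apply,
            update_zero_comp_succ, Function.update_self, map_add,
            TensorProduct.map_add_right]
          erw [LinearMap.add_apply]
          simp only [TensorProduct.lift.tmul, LinearMap.comp_apply, LinearMap.llcomp_apply,
            LinearMap.flip_apply]
      | succ i =>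
          simp only [measurePair, TensorProduct.lift.tmul, LinearMap.comp_apply,
            LinearMap.llcomp_apply, LinearMap.flip_apply, LinearMap.add_apply,
            update_comp_succ, Function.update_of_ne (Ne.symm (Fin.succ_ne_zero i)), ih]
          erw [LinearMap.add_apply]
          simp only [TensorProduct.lift.tmul, LinearMap.comp_apply, LinearMap.llcomp_apply,
            LinearMap.flip_apply]
          simp [map_add]

lemma measurePair_update_smul (k : ℕ) (m : M) (a : Fin k → A) (i : Fin k) (r : K) (x : A) :
    measurePair K A B C D M N ψ φ k m (Function.update a i (r • x))
      = r • measurePair K A B C D M N ψ φ k m (Function.update a i x) := by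
  induction k with
  | zero => exact i.elim0
  | succ k ih =>
      apply TensorProduct.ext'
      intro s w
      induction i using Fin.cases with
      | zero =>
          simp only [measurePair, TensorProduct.lift.tmul, LinearMap.comp_apply,
            LinearMap.llcomp_apply, LinearMap.flip_apply, LinearMap.smul_apply,
            update_zero_comp_succ, Function.update_self, map_smul,
            TensorProduct.map_smul_right]
          erw [LinearMap.smul_apply]
          simp only [TensorProduct.lift.tmul, LinearMap.comp_apply, LinearMap.llcomp_apply,
            LinearMap.flip_apply]
      | succ i =>
          simp only [measurePair, TensorProduct.lift.tmul, LinearMap.comp_apply,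
            LinearMap.llcomp_apply, LinearMap.flip_apply, LinearMap.smul_apply,
            update_comp_succ, Function.update_of_ne (Ne.symm (Fin.succ_ne_zero i)), ih]
          erw [LinearMap.smul_apply]
          simp only [TensorProduct.lift.tmul, LinearMap.comp_apply, LinearMap.llcomp_apply,
            LinearMap.flip_apply]
          simp [map_smul]

/-- The Sweedler-type multilinear map of the measuring at `t`. -/
noncomputable def etaMul (t : D) (k : ℕ) (m : M) :
    MultilinearMap K (fun _ : Fin k => A) (Lob K B N k) :=
  ⟨fun a => measurePair K A B C D M N ψ φ k m a (coactIter K C D ρ k t),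
   fun a i x y => by
     rename_i inst
     rw [Subsingleton.elim inst (instDecidableEqFin k)]
     have := LinearMap.congr_fun (measurePair_update_add ψ φ k m a i x y)
       (coactIter K C D ρ k t)
     simpa using this,
   fun a i r x => by
     rename_i inst
     rw [Subsingleton.elim inst (instDecidableEqFin k)]
     have := LinearMap.congr_fun (measurePair_update_smul ψ φ k m a i r x)
       (coactIter K C D ρ k t)
     simpa using this⟩

/-- The chain-level map `m ⊗ a₁ ⊗ ⋯ ⊗ aₖ ↦ Σ φ t₍₀₎ m ⊗ ψ t₍₁₎ a₁ ⊗ ⋯ ⊗ ψ t₍ₖ₎ aₖ`. -/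
noncomputable def etaMap (t : D) (k : ℕ) : Lob K A M k →ₗ[K] Lob K B N k :=
  TensorProduct.lift
    ⟨⟨fun m => PiTensorProduct.lift (etaMul ψ ρ φ t k m),
      fun m m' => by
        have h : etaMul ψ ρ φ t k (m + m') = etaMul ψ ρ φ t k m + etaMul ψ ρ φ t k m' := by
          apply MultilinearMap.ext
          intro a
          show measurePair K A B C D M N ψ φ k (m + m') a (coactIter K C D ρ k t) = _
          rw [measurePair_add_m]
          rfl
        show PiTensorProduct.lift (etaMul ψ ρ φ t k (m + m')) = _
        rw [h, map_add]⟩,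
      fun r m => by
        have h : etaMul ψ ρ φ t k (r • m) = r • etaMul ψ ρ φ t k m := by
          apply MultilinearMap.ext
          intro a
          show measurePair K A B C D M N ψ φ k (r • m) a (coactIter K C D ρ k t) = _
          rw [measurePair_smul_m]
          rfl
        show PiTensorProduct.lift (etaMul ψ ρ φ t k (r • m)) = _
        rw [h, map_smul]
        rfl⟩

lemma etaMap_apply (t : D) (k : ℕ) (m : M) (a : Fin k → A) :
    etaMap ψ ρ φ t k (m ⊗ₜ[K] PiTensorProduct.tprod K a)
      = measurePair K A B C D M N ψ φ k m a (coactIter K C D ρ k t) := by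
  simp only [etaMap, TensorProduct.lift.tmul, LinearMap.coe_mk, AddHom.coe_mk,
    PiTensorProduct.lift.tprod]
  rfl

lemma etaMap_natural (hco : IsCocommutative K C) (hψ : IsMeasuring K A B C ψ)
    (hφ : IsComodMeasuring K A B C D M N ψ ρ φ)
    (F : ∀ k l : ℕ, GammaHom k l → (Lob K A M k →ₗ[K] Lob K A M l))
    (hF : ∀ (k l : ℕ) (f : GammaHom k l) (m : M) (a : Fin k → A),
        F k l f (m ⊗ₜ[K] PiTensorProduct.tprod K a) = lodayElt K A M f m a)
    (G : ∀ k l : ℕ, GammaHom k l → (Lob K B N k →ₗ[K] Lob K B N l))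
    (hG : ∀ (k l : ℕ) (f : GammaHom k l) (n : N) (b : Fin k → B),
        G k l f (n ⊗ₜ[K] PiTensorProduct.tprod K b) = lodayElt K B N f n b)
    (hGcomp : ∀ (k l p : ℕ) (f : GammaHom k l) (g : GammaHom l p),
        G k p (g.comp f) = (G l p g) ∘ₗ (G k l f))
    (t : D) (k l : ℕ) (f : GammaHom k l) :
    G k l f ∘ₗ etaMap ψ ρ φ t k = etaMap ψ ρ φ t l ∘ₗ F k l f := by
  apply TensorProduct.ext'
  intro m x
  induction x using PiTensorProduct.induction_on with
  | smul_tprod r a =>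
      simp only [TensorProduct.tmul_smul, map_smul]
      congr 1
      simp only [LinearMap.comp_apply, etaMap_apply, hF, lodayElt, etaMap_apply]
      have hk := key ψ ρ φ G hG hco hψ hφ hGcomp k l f m a
      have h2 := LinearMap.congr_fun hk t
      simpa only [LinearMap.comp_apply, Ev] using h2
  | add x y hx hy =>
      simp only [TensorProduct.tmul_add, map_add, hx, hy]

end Eta

end HHAux

/-- Theorem 2.3, first part. Let `ψ : C →ₗ[K] Hom_K(A,B)` be a
cocommutative coalgebra measuring between commutative `K`-algebras and
`φ : D →ₗ[K] Hom_K(M,N)` a `C`-comodule measuring relative to `ψ`.  Given the Loday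
`Γ`-modules `L(A,M)` and `L(B,N)` (families `F`, `G` of linear maps acting by the Loday
formula on pure tensors and functorial), for every pointed simplicial set `Y` and every
`t ∈ D` there is a natural transformation `L^φ(t) : L(A,M) ⟶ L(B,N)` acting on pure
tensors by `m ⊗ a₁ ⊗ ⋯ ⊗ aₖ ↦ Σ φ t₍₀₎ m ⊗ ψ t₍₁₎ a₁ ⊗ ⋯ ⊗ ψ t₍ₖ₎ aₖ`, and for each
`n ≥ 0` an induced `K`-linear morphism
`φ^Y_n(t) : HH_n^Y(A,M) ⟶ HH_n^Y(B,N)` on higher order Hochschild homology, namely the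
map induced on `H_n` by `L^φ(t)` through Kan extension along `Γ → Sets_⋆`, evaluation
on `Y`, and the Moore complex. -/
theorem measuring_induces_hh_map (K A B C D M N : Type) [Field K]
    [CommRing A] [Algebra K A] [CommRing B] [Algebra K B]
    [AddCommGroup C] [Module K C] [Coalgebra K C]
    [AddCommGroup D] [Module K D]
    [AddCommGroup M] [Module K M] [Module A M] [IsScalarTower K A M] [SMulCommClass K A M]
    [AddCommGroup N] [Module K N] [Module B N] [IsScalarTower K B N] [SMulCommClass K B N]
    (ψ : C →ₗ[K] A →ₗ[K] B) (hψ : IsMeasuring K A B C ψ)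
    (hcocomm : IsCocommutative K C)
    (ρ : CoactionStruct K C D) (φ : D →ₗ[K] M →ₗ[K] N)
    (hφ : IsComodMeasuring K A B C D M N ψ ρ φ)
    (F : ∀ k l : ℕ, GammaHom k l → (Lob K A M k →ₗ[K] Lob K A M l))
    (hF : ∀ (k l : ℕ) (f : GammaHom k l) (m : M) (a : Fin k → A),
        F k l f (m ⊗ₜ[K] tprod K a) = lodayElt K A M f m a)
    (hFid : ∀ k, F k k (GammaHom.id k) = LinearMap.id)
    (hFcomp : ∀ (k l p : ℕ) (f : GammaHom k l) (g : GammaHom l p),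
        F k p (g.comp f) = (F l p g) ∘ₗ (F k l f))
    (G : ∀ k l : ℕ, GammaHom k l → (Lob K B N k →ₗ[K] Lob K B N l))
    (hG : ∀ (k l : ℕ) (f : GammaHom k l) (n : N) (b : Fin k → B),
        G k l f (n ⊗ₜ[K] tprod K b) = lodayElt K B N f n b)
    (hGid : ∀ k, G k k (GammaHom.id k) = LinearMap.id)
    (hGcomp : ∀ (k l p : ℕ) (f : GammaHom k l) (g : GammaHom l p),
        G k p (g.comp f) = (G l p g) ∘ₗ (G k l f))
    (Y : SimplexCategoryᵒᵖ ⥤ Pointed.{0}) (t : D) :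
    ∃ η : lodayFunctorOf K A M F hFid hFcomp ⟶ lodayFunctorOf K B N G hGid hGcomp,
      (∀ (k : ℕ) (m : M) (a : Fin k → A),
          η.app ⟨k⟩ (m ⊗ₜ[K] tprod K a) =
            measurePair K A B C D M N ψ φ k m a (coactIter K C D ρ k t)) ∧
      (∀ n : ℕ, ∃ induced :
            hh K (lodayFunctorOf K A M F hFid hFcomp) Y n ⟶
              hh K (lodayFunctorOf K B N G hGid hGcomp) Y n,
          induced = hhMapOfNat K η Y n) := by
  refine ⟨{ app := fun x => ModuleCat.ofHom (HHAux.etaMap ψ ρ φ t x.len),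
            naturality := by
              intro x y f
              exact ModuleCat.hom_ext (HHAux.etaMap_natural ψ ρ φ hcocomm hψ hφ F hF G hG hGcomp
                t x.len y.len f).symm },
          ?_, ?_⟩
  · intro k m a
    exact HHAux.etaMap_apply ψ ρ φ t k m a
  · intro n
    exact ⟨_, rfl⟩
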